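/- Let T ⊆ ℕ^{<ℕ} be a tree with an infinite branch α ∈ ℕ^ℕ, and set s_n = (α_1, …, α_n) for n ≥ 1 and s_0 = (). Then in ℓ¹(ℕ^{<ℕ}) ⊕ ℓ¹(ℕ^{<ℕ}), the sequence a_{s_n} ⊕ b_{s_n} converges in norm to ξ ⊕ 0, where ξ = δ_{()} + ∑_{n=1}^∞ 2^{-n} δ_{s_n}; in particular ξ ≠ 0 and ξ ⊕ 0 lies in the closed span of { a_s ⊕ b_s : s ∈ T }. -/

import Mathlib

/-- `δ_t ∈ ℓ¹(ℕ^{<ℕ})`, the indicator of the singleton `{t}`. -/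
noncomputable def deltaVec (t : List ℕ) : lp (fun _ : List ℕ => ℝ) 1 := lp.single 1 t 1

/-- `a_s = ∑_{t ⪯ s} 2^{-|t|} δ_t`. -/
noncomputable def aVec (s : List ℕ) : lp (fun _ : List ℕ => ℝ) 1 :=
  ∑ t ∈ s.inits.toFinset, (2 : ℝ) ^ (-(t.length : ℤ)) • deltaVec t

/-- `b_s = 2^{-|s|} δ_s`. -/
noncomputable def bVec (s : List ℕ) : lp (fun _ : List ℕ => ℝ) 1 :=
  (2 : ℝ) ^ (-(s.length : ℤ)) • deltaVec s

/-- `W_T`, the closed linear span of `{a_s ⊕ b_s : s ∈ T}` in `ℓ¹ ⊕ ℓ¹`. -/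
noncomputable def Wspace (T : Set (List ℕ)) :
    Set ((lp (fun _ : List ℕ => ℝ) 1) × (lp (fun _ : List ℕ => ℝ) 1)) :=
  closure ((Submodule.span ℝ ((fun s => (aVec s, bVec s)) '' T) : Submodule ℝ _) : Set _)

lemma norm_deltaVec (t : List ℕ) : ‖deltaVec t‖ = 1 := by
  have := lp.norm_single (p := 1) (E := fun _ : List ℕ => ℝ) (by norm_num) t (1 : ℝ)
  simpa [deltaVec] using this

/-- Coordinate evaluation as a continuous linear map on `ℓ¹`. -/
noncomputable def evalCLM (i : List ℕ) : lp (fun _ : List ℕ => ℝ) 1 →L[ℝ] ℝ :=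
  LinearMap.mkContinuous
    { toFun := fun f => f i
      map_add' := fun f g => by simp
      map_smul' := fun c f => by simp }
    1 (fun f => by change ‖f i‖ ≤ 1 * ‖f‖; simpa using lp.norm_apply_le_norm one_ne_zero f i)

lemma evalCLM_apply (i : List ℕ) (f : lp (fun _ : List ℕ => ℝ) 1) : evalCLM i f = f i := rfl

lemma aVec_succ (α : ℕ → ℕ) (s : ℕ → List ℕ) (hs : ∀ n, s n = (List.range n).map α) (n : ℕ) :
    aVec (s (n+1)) = aVec (s n) + (2:ℝ) ^ (-((n:ℤ)+1)) • deltaVec (s (n+1)) := by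
  have hlen : ∀ k, (s k).length = k := fun k => by simp [hs]
  have hsucc : s (n+1) = s n ++ [α n] := by
    simp [hs, List.range_succ]
  have hinits : (s (n+1)).inits = (s n).inits ++ [s (n+1)] := by
    rw [hsucc, List.inits_append]
    simp
  have hnotmem : s (n+1) ∉ (s n).inits.toFinset := by
    intro h
    have : s (n+1) <+: s n := by simpa [List.mem_inits] using h
    have := this.length_le
    simp [hlen] at this
  rw [aVec, hinits]
  have : ((s n).inits ++ [s (n+1)]).toFinset = insert (s (n+1)) (s n).inits.toFinset := by
    simp [List.toFinset_append]
  rw [this, Finset.sum_insert hnotmem, hlen, aVec, add_comm]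
  push_cast
  ring_nf

lemma aVec_partial (α : ℕ → ℕ) (s : ℕ → List ℕ) (hs : ∀ n, s n = (List.range n).map α) (n : ℕ) :
    aVec (s n) = deltaVec [] +
      ∑ k ∈ Finset.range n, (2:ℝ) ^ (-((k:ℤ)+1)) • deltaVec (s (k+1)) := by
  induction n with
  | zero =>
      have h0 : s 0 = [] := by simp [hs]
      simp [aVec, h0]
  | succ n ih =>
      rw [aVec_succ α s hs n, ih, Finset.sum_range_succ, add_assoc]

lemma summable_terms (s : ℕ → List ℕ) :
    Summable (fun n : ℕ => (2:ℝ) ^ (-((n:ℤ)+1)) • deltaVec (s (n+1))) := by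
  apply Summable.of_norm
  have hnorm : ∀ n : ℕ, ‖(2:ℝ) ^ (-((n:ℤ)+1)) • deltaVec (s (n+1))‖ = (1/2 : ℝ) ^ (n+1) := by
    intro n
    rw [norm_smul, norm_deltaVec, mul_one, Real.norm_eq_abs]
    rw [abs_of_pos (by positivity)]
    rw [show (-((n:ℤ)+1)) = -((n+1 : ℕ) : ℤ) by push_cast; ring]
    rw [zpow_neg, zpow_natCast, one_div, inv_pow]
  simp only [hnorm]
  exact ((summable_geometric_of_lt_one (by norm_num) (by norm_num)).comp_injective
    (add_left_injective 1))

/-- Along an infinite branch `α` of a tree `T`, with `s_n = (α_1,…,α_n)`, the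
vectors `a_{s_n} ⊕ b_{s_n}` converge in norm to `ξ ⊕ 0`, where
`ξ = δ_{()} + ∑_{n≥1} 2^{-n} δ_{s_n} ≠ 0`; in particular `ξ ⊕ 0 ∈ W_T`. -/
theorem branch_limit_mem_Wspace
    (T : Set (List ℕ)) (hT : ∀ s ∈ T, ∀ t : List ℕ, t <+: s → t ∈ T)
    (α : ℕ → ℕ) (s : ℕ → List ℕ) (hs : ∀ n, s n = (List.range n).map α)
    (hbranch : ∀ n, s n ∈ T)
    (ξ : lp (fun _ : List ℕ => ℝ) 1)
    (hξ : ξ = deltaVec [] + ∑' n : ℕ, (2 : ℝ) ^ (-((n : ℤ) + 1)) • deltaVec (s (n + 1))) :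
    Filter.Tendsto (fun n => (aVec (s n), bVec (s n))) Filter.atTop
      (nhds (ξ, 0)) ∧ ξ ≠ 0 ∧ (ξ, (0 : lp (fun _ : List ℕ => ℝ) 1)) ∈ Wspace T := by
  have hsum := summable_terms s
  -- convergence of aVec
  have ha : Filter.Tendsto (fun n => aVec (s n)) Filter.atTop (nhds ξ) := by
    have h1 := hsum.hasSum.tendsto_sum_nat
    have h2 := h1.const_add (deltaVec [])
    rw [← hξ] at h2
    refine h2.congr fun n => ?_
    rw [aVec_partial α s hs n]
  -- convergence of bVec
  have hb : Filter.Tendsto (fun n => bVec (s n)) Filter.atTop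
      (nhds (0 : lp (fun _ : List ℕ => ℝ) 1)) := by
    rw [tendsto_zero_iff_norm_tendsto_zero]
    have hnorm : ∀ n : ℕ, ‖bVec (s n)‖ = (1/2 : ℝ) ^ n := by
      intro n
      have hlen : (s n).length = n := by simp [hs]
      rw [bVec, norm_smul, norm_deltaVec, mul_one, Real.norm_eq_abs, hlen,
        abs_of_pos (by positivity), zpow_neg, zpow_natCast, one_div, inv_pow]
    simp only [hnorm]
    exact tendsto_pow_atTop_nhds_zero_of_lt_one (by norm_num) (by norm_num)
  have htend : Filter.Tendsto (fun n => (aVec (s n), bVec (s n))) Filter.atTop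
      (nhds (ξ, 0)) := ha.prodMk_nhds hb
  refine ⟨htend, ?_, ?_⟩
  · -- ξ ≠ 0 : evaluate at []
    intro h0
    have hξnil : evalCLM [] ξ = 1 := by
      rw [hξ, map_add, (evalCLM []).map_tsum hsum]
      have h1 : evalCLM [] (deltaVec []) = 1 := by
        rw [evalCLM_apply, deltaVec, lp.single_apply_self]
      have h2 : ∀ n : ℕ, evalCLM [] ((2:ℝ) ^ (-((n:ℤ)+1)) • deltaVec (s (n+1))) = 0 := by
        intro n
        have hne : ([] : List ℕ) ≠ s (n+1) := by
          intro h
          have : (s (n+1)).length = n+1 := by simp [hs]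
          rw [← h] at this
          simp at this
        rw [map_smul, evalCLM_apply, deltaVec, lp.single_apply_ne 1 _ _ hne, smul_zero]
      rw [h1, tsum_congr h2, tsum_zero, add_zero]
    rw [h0, map_zero] at hξnil
    norm_num at hξnil
  · -- membership in Wspace
    have hmem : ∀ n, (aVec (s n), bVec (s n)) ∈ Wspace T := by
      intro n
      apply subset_closure
      exact Submodule.subset_span ⟨s n, hbranch n, rfl⟩
    exact isClosed_closure.mem_of_tendsto htend (Filter.Eventually.of_forall hmem)
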